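/- Suppose (c_{i,j})_{i,j∈ℤ} are complex numbers with c_{i,j} = -c_{j,i} for all i,j, and suppose there exist complex numbers (b_{i,j}) such that for all i,j ∈ ℤ the polynomial identity (λ-μ)·b_{i+j,0}·(λ+μ)² = ((1/2)λ+(3/2)μ)·c_{i,j}·λ² − ((1/2)μ+(3/2)λ)·c_{j,i}·μ² holds in ℂ[λ,μ]. Then c_{i,j} = 0 and b_{i+j,0} = 0 for all i,j ∈ ℤ. -/
import Mathlib

/-- If c_{i,j} = -c_{j,i} and (λ-μ)·b_{i+j,0}·(λ+μ)² =
((1/2)λ+(3/2)μ)·c_{i,j}·λ² − ((1/2)μ+(3/2)λ)·c_{j,i}·μ² holds as polynomials in λ,μ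
(equivalently for all complex values), then c and the relevant b's vanish. -/
theorem stmt_6 (c b : ℤ → ℤ → ℂ)
    (hskew : ∀ i j : ℤ, c i j = - c j i)
    (h : ∀ i j : ℤ, ∀ l m : ℂ,
      (l - m) * b (i + j) 0 * (l + m) ^ 2
        = ((1/2) * l + (3/2) * m) * c i j * l ^ 2
          - ((1/2) * m + (3/2) * l) * c j i * m ^ 2) :
    ∀ i j : ℤ, c i j = 0 ∧ b (i + j) 0 = 0 := by
  intro i j
  have h1 := h i j 1 1
  have h2 := h i j 1 0
  rw [hskew i j] at h1 h2
  constructor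
  · rw [hskew i j]
    linear_combination (-1/4 : ℂ) * h1
  · linear_combination h2 - (1/8 : ℂ) * h1
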